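/- The two sides of the 3→3 relation are independent of the admissible choice of 2-face weight: if w and w′ are both homogeneous of degree 1 in G with d_{123}w = d_{123}w′ = 1, then ∫ W_{12345} W_{12346} W_{12356} w da_{1234} db_{1234} da_{1235} db_{1235} da_{1236} db_{1236} = ∫ W_{12345} W_{12346} W_{12356} w′ da_{1234} db_{1234} da_{1235} db_{1235} da_{1236} db_{1236}; and if v and v′ are both homogeneous of degree 1 with d_{456}v = d_{456}v′ = 1, then ∫ W_{12456} W_{13456} W_{23456} v da_{1456} db_{1456} da_{2456} db_{2456} da_{3456} db_{3456} = ∫ W_{12456} W_{13456} W_{23456} v′ da_{1456} db_{1456} da_{2456} db_{2456} da_{3456} db_{3456}. -/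

import Mathlib

/-!
Common setup: the Grassmann algebra `G` over `ℂ` with anticommuting generators
`a_{ijkl}`, `b_{ijkl}`, one pair for each 4-element subset `{i,j,k,l} ⊆ {1,…,6}`
(`i<j<k<l`), realized as the exterior algebra of the free `ℂ`-module on the generators;
left derivatives `∂/∂x` (left contraction with the dual functional of the generator `x`),
Berezin integrals `∫ · dx` (right contraction with the dual functional, which is the
`ℂ`-linear operator determined by `∫1 dx = 0`, `∫x dx = 1`, `∫ g·h dx = g·∫h dx`
whenever `g` does not involve `x`), the 4-simplex weights `W_{ijklm}` and the 2-face
operators `d_{ijk}` of Korepanov's paper on Pachner moves 3→3 and 2↔4.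
-/

noncomputable section

/-- Index type for the Grassmann generators: a Boolean tag (`true` for the `a` variables,
`false` for the `b` variables) together with a 4-element subset of `{1,…,6}`. -/
def GIdx : Type := Bool × {T : Finset ℕ // T ⊆ Finset.Icc 1 6 ∧ T.card = 4}

instance : DecidableEq GIdx := by unfold GIdx; infer_instance

/-- The underlying free `ℂ`-module on the generators. -/
abbrev GV : Type := GIdx → ℂ

/-- `G`, the Grassmann algebra over `ℂ` on the anticommuting generators `a_{ijkl}`, `b_{ijkl}`. -/
abbrev GA : Type := ExteriorAlgebra ℂ GV

/-- The Grassmann generator tagged `c` attached to the subset `T` (junk value `0` for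
invalid `T`; all generators actually used are valid). -/
def gen (c : Bool) (T : Finset ℕ) : GA :=
  if h : T ⊆ Finset.Icc 1 6 ∧ T.card = 4 then
    ExteriorAlgebra.ι ℂ (Pi.single (⟨c, T, h⟩ : GIdx) (1 : ℂ))
  else 0

/-- The generator `a_{ijkl}`. -/
def ga (i j k l : ℕ) : GA := gen true {i, j, k, l}

/-- The generator `b_{ijkl}`. -/
def gb (i j k l : ℕ) : GA := gen false {i, j, k, l}

/-- The dual functional picking out the coordinate of a generator. -/
def dual (c : Bool) (T : Finset ℕ) : Module.Dual ℂ GV :=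
  if h : T ⊆ Finset.Icc 1 6 ∧ T.card = 4 then LinearMap.proj (⟨c, T, h⟩ : GIdx) else 0

/-- The left derivative `∂/∂a_{ijkl}`: the `ℂ`-linear operator sending a monomial containing
`a_{ijkl}` to the monomial obtained by moving `a_{ijkl}` to the left end via the anticommutation
relations and deleting it, and sending monomials not containing it to `0`.  This is exactly
left contraction (interior product) with the dual functional of the generator. -/
def pdA (i j k l : ℕ) : GA →ₗ[ℂ] GA := CliffordAlgebra.contractLeft (dual true {i, j, k, l})

/-- The left derivative `∂/∂b_{ijkl}`. -/
def pdB (i j k l : ℕ) : GA →ₗ[ℂ] GA := CliffordAlgebra.contractLeft (dual false {i, j, k, l})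

/-- The Berezin integral `∫ · da_{ijkl}`: the `ℂ`-linear operator on `G` with
`∫ 1 da = 0`, `∫ a da = 1` and `∫ g·h da = g·(∫ h da)` whenever `g` does not involve `a`.
This is exactly right contraction with the dual functional of the generator. -/
def binA (i j k l : ℕ) : GA →ₗ[ℂ] GA :=
  CliffordAlgebra.contractRight.flip (dual true {i, j, k, l})

/-- The Berezin integral `∫ · db_{ijkl}`. -/
def binB (i j k l : ℕ) : GA →ₗ[ℂ] GA :=
  CliffordAlgebra.contractRight.flip (dual false {i, j, k, l})

/-- The iterated Berezin integral `∫ · da_{ijkl} db_{ijkl}` (first in `a_{ijkl}`, then in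
`b_{ijkl}`). -/
def binAB (i j k l : ℕ) : GA →ₗ[ℂ] GA := binB i j k l ∘ₗ binA i j k l

/-- `homog n w` says that `w` is homogeneous of degree `n` in the Grassmann algebra `G`,
i.e. lies in the `n`-th graded piece (the `n`-th power of the submodule of degree-1
elements). -/
def homog (n : ℕ) (w : GA) : Prop :=
  w ∈ (LinearMap.range (ExteriorAlgebra.ι ℂ : GV →ₗ[ℂ] GA)) ^ n

/-- `ζ_{ij} = ζ_i - ζ_j`. -/
def zz (ζ : ℕ → ℂ) (i j : ℕ) : ℂ := ζ i - ζ j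

/-- The 4-simplex weight `W_{ijklm}` (for `i<j<k<l<m`):
`W_{ijklm} = (1/ζ_{lm})·(ζ_{kl}a_{ijkl} − ζ_{km}a_{ijkm} + ζ_{lm}a_{ijlm} − ζ_{lm}a_{iklm})`
`·(ζ_{kl}b_{ijkl} − ζ_{km}b_{ijkm} + ζ_{lm}b_{ijlm} + ζ_{lm}a_{jklm})`
`·(−ζ_{il}a_{ijkl} − ζ_{jl}b_{ijkl} + ζ_{im}a_{ijkm} + ζ_{jm}b_{ijkm} − ζ_{lm}b_{iklm} + ζ_{lm}b_{jklm})`. -/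
def Wt (ζ : ℕ → ℂ) (i j k l m : ℕ) : GA :=
  (zz ζ l m)⁻¹ •
    ((zz ζ k l • ga i j k l - zz ζ k m • ga i j k m + zz ζ l m • ga i j l m
        - zz ζ l m • ga i k l m) *
      (zz ζ k l • gb i j k l - zz ζ k m • gb i j k m + zz ζ l m • gb i j l m
        + zz ζ l m • ga j k l m) *
      (-(zz ζ i l • ga i j k l) - zz ζ j l • gb i j k l + zz ζ i m • ga i j k m
        + zz ζ j m • gb i j k m - zz ζ l m • gb i k l m + zz ζ l m • gb j k l m))

/-- The operator `d_{123}` attached to the 2-face `123`: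
`d_{123} = (ζ_{23}/ζ_{34})∂/∂a_{1234} + (ζ_{31}/ζ_{34})∂/∂b_{1234} + (ζ_{23}/ζ_{35})∂/∂a_{1235}`
`+ (ζ_{31}/ζ_{35})∂/∂b_{1235} + (ζ_{23}/ζ_{36})∂/∂a_{1236} + (ζ_{31}/ζ_{36})∂/∂b_{1236}`. -/
def d123 (ζ : ℕ → ℂ) : GA →ₗ[ℂ] GA :=
  (zz ζ 2 3 / zz ζ 3 4) • pdA 1 2 3 4 + (zz ζ 3 1 / zz ζ 3 4) • pdB 1 2 3 4
    + (zz ζ 2 3 / zz ζ 3 5) • pdA 1 2 3 5 + (zz ζ 3 1 / zz ζ 3 5) • pdB 1 2 3 5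
    + (zz ζ 2 3 / zz ζ 3 6) • pdA 1 2 3 6 + (zz ζ 3 1 / zz ζ 3 6) • pdB 1 2 3 6

/-- The operator `d_{456}` attached to the 2-face `456`:
`d_{456} = −∂/∂b_{1456} − ∂/∂b_{2456} − ∂/∂b_{3456}`. -/
def d456 : GA →ₗ[ℂ] GA := -pdB 1 4 5 6 - pdB 2 4 5 6 - pdB 3 4 5 6

/-- The operator `d_{156}` attached to the 2-face `156`:
`d_{156} = ∂/∂a_{1256} + ∂/∂a_{1356} + ∂/∂a_{1456}`. -/
def d156 : GA →ₗ[ℂ] GA := pdA 1 2 5 6 + pdA 1 3 5 6 + pdA 1 4 5 6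

/-- The operator `d_{256}` attached to the 2-face `256`:
`d_{256} = −∂/∂b_{1256} + ∂/∂a_{2356} + ∂/∂a_{2456}`. -/
def d256 : GA →ₗ[ℂ] GA := -pdB 1 2 5 6 + pdA 2 3 5 6 + pdA 2 4 5 6

/-- The operator `d_{356}` attached to the 2-face `356`:
`d_{356} = −∂/∂b_{1356} − ∂/∂b_{2356} + ∂/∂a_{3456}`. -/
def d356 : GA →ₗ[ℂ] GA := -pdB 1 3 5 6 - pdB 2 3 5 6 + pdA 3 4 5 6

/-- The integral on the left-hand side of the `3→3` relation, with 2-face weight `w`: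
`∫ W₁₂₃₄₅ W₁₂₃₄₆ W₁₂₃₅₆ w da₁₂₃₄ db₁₂₃₄ da₁₂₃₅ db₁₂₃₅ da₁₂₃₆ db₁₂₃₆`
(iterated Berezin integral, innermost first). -/
def int33L (ζ : ℕ → ℂ) (w : GA) : GA :=
  binAB 1 2 3 6 (binAB 1 2 3 5 (binAB 1 2 3 4
    (Wt ζ 1 2 3 4 5 * Wt ζ 1 2 3 4 6 * Wt ζ 1 2 3 5 6 * w)))

/-- The integral on the right-hand side of the `3→3` relation, with 2-face weight `w`:
`∫ W₁₂₄₅₆ W₁₃₄₅₆ W₂₃₄₅₆ w da₁₄₅₆ db₁₄₅₆ da₂₄₅₆ db₂₄₅₆ da₃₄₅₆ db₃₄₅₆`. -/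
def int33R (ζ : ℕ → ℂ) (w : GA) : GA :=
  binAB 3 4 5 6 (binAB 2 4 5 6 (binAB 1 4 5 6
    (Wt ζ 1 2 4 5 6 * Wt ζ 1 3 4 5 6 * Wt ζ 2 3 4 5 6 * w)))

/-- The left-hand side of the `3→3` relation:
`(1/(ζ₃₄ζ₃₅ζ₃₆)) · ∫ W₁₂₃₄₅ W₁₂₃₄₆ W₁₂₃₅₆ w da₁₂₃₄ db₁₂₃₄ da₁₂₃₅ db₁₂₃₅ da₁₂₃₆ db₁₂₃₆`. -/
def lhs33 (ζ : ℕ → ℂ) (w : GA) : GA :=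
  (zz ζ 3 4 * zz ζ 3 5 * zz ζ 3 6)⁻¹ • int33L ζ w

/-- The right-hand side of the `3→3` relation:
`(1/ζ₅₆³) · ∫ W₁₂₄₅₆ W₁₃₄₅₆ W₂₃₄₅₆ w da₁₄₅₆ db₁₄₅₆ da₂₄₅₆ db₂₄₅₆ da₃₄₅₆ db₃₄₅₆`. -/
def rhs33 (ζ : ℕ → ℂ) (w : GA) : GA :=
  (zz ζ 5 6 ^ 3)⁻¹ • int33R ζ w

/-- The left-hand side of the `2→4` relation:
`(1/ζ₃₄) · ∫ W₁₂₃₄₅ W₁₂₃₄₆ da₁₂₃₄ db₁₂₃₄`. -/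
def lhs24 (ζ : ℕ → ℂ) : GA :=
  (zz ζ 3 4)⁻¹ • binAB 1 2 3 4 (Wt ζ 1 2 3 4 5 * Wt ζ 1 2 3 4 6)

/-- The integral on the right-hand side of the `2→4` relation, with 2-face weight `w`:
`∫ W₁₂₃₅₆ W₁₂₄₅₆ W₁₃₄₅₆ W₂₃₄₅₆ w da₁₂₅₆ db₁₂₅₆ da₁₃₅₆ db₁₃₅₆ da₁₄₅₆ db₁₄₅₆ da₂₃₅₆ db₂₃₅₆ da₂₄₅₆ db₂₄₅₆ da₃₄₅₆ db₃₄₅₆`. -/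
def int24R (ζ : ℕ → ℂ) (w : GA) : GA :=
  binAB 3 4 5 6 (binAB 2 4 5 6 (binAB 2 3 5 6 (binAB 1 4 5 6 (binAB 1 3 5 6 (binAB 1 2 5 6
    (Wt ζ 1 2 3 5 6 * Wt ζ 1 2 4 5 6 * Wt ζ 1 3 4 5 6 * Wt ζ 2 3 4 5 6 * w))))))

/-- The right-hand side of the `2→4` relation:
`−ζ₅₆ · (1/ζ₅₆⁶) · ∫ W₁₂₃₅₆ W₁₂₄₅₆ W₁₃₄₅₆ W₂₃₄₅₆ w da₁₂₅₆ db₁₂₅₆ ⋯ da₃₄₅₆ db₃₄₅₆`. -/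
def rhs24 (ζ : ℕ → ℂ) (w : GA) : GA :=
  (-zz ζ 5 6) • ((zz ζ 5 6 ^ 6)⁻¹ • int24R ζ w)

section FaceIndependenceAux

open CliffordAlgebra

/-- Basis vector of `GV` attached to a generator (junk `0` for invalid `T`). -/
def eV (c : Bool) (T : Finset ℕ) : GV :=
  if h : T ⊆ Finset.Icc 1 6 ∧ T.card = 4 then Pi.single (⟨c, T, h⟩ : GIdx) (1 : ℂ) else 0

lemma gen_eq (c : Bool) (T : Finset ℕ) : gen c T = ExteriorAlgebra.ι ℂ (eV c T) := by
  unfold gen eV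
  split
  · rfl
  · simp

lemma dual_pos (c : Bool) (T : Finset ℕ) (hT : T ⊆ Finset.Icc 1 6 ∧ T.card = 4) :
    dual c T = LinearMap.proj (⟨c, T, hT⟩ : GIdx) := by
  unfold dual; exact dif_pos hT

lemma dual_neg (c : Bool) (T : Finset ℕ) (hT : ¬ (T ⊆ Finset.Icc 1 6 ∧ T.card = 4)) :
    dual c T = 0 := by
  unfold dual; exact dif_neg hT

lemma dual_eV (c c' : Bool) (T T' : Finset ℕ) :
    dual c T (eV c' T') =
      if (T ⊆ Finset.Icc 1 6 ∧ T.card = 4) ∧ (T' ⊆ Finset.Icc 1 6 ∧ T'.card = 4)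
          ∧ c = c' ∧ T = T' then 1 else 0 := by
  unfold eV
  by_cases hT : T ⊆ Finset.Icc 1 6 ∧ T.card = 4
  · rw [dual_pos c T hT]
    by_cases hT' : T' ⊆ Finset.Icc 1 6 ∧ T'.card = 4
    · rw [dif_pos hT']
      show (Pi.single (M := fun _ : GIdx => ℂ) (⟨c', T', hT'⟩ : GIdx) (1:ℂ)) (⟨c, T, hT⟩ : GIdx) = _
      erw [Pi.single_apply]
      by_cases h : c = c' ∧ T = T'
      · obtain ⟨rfl, rfl⟩ := h
        erw [if_pos rfl, if_pos ⟨hT, hT', rfl, rfl⟩]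
      · erw [if_neg, if_neg fun hh => h ⟨hh.2.2.1, hh.2.2.2⟩]
        intro he
        apply h
        have h1 : (⟨c, T, hT⟩ : GIdx).1 = (⟨c', T', hT'⟩ : GIdx).1 := by rw [he]
        have h2 : ((⟨c, T, hT⟩ : GIdx).2 : Finset ℕ) = ((⟨c', T', hT'⟩ : GIdx).2 : Finset ℕ) := by
          rw [he]
        exact ⟨h1, h2⟩
    · rw [dif_neg hT']; exact (if_neg fun hh => hT' hh.2.1).symm
  · rw [dual_neg c T hT, LinearMap.zero_apply, if_neg fun hh => hT hh.1]

/-- The first factor of `Wt`, as a vector. -/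
def vA (ζ : ℕ → ℂ) (i j k l m : ℕ) : GV :=
  zz ζ k l • eV true {i,j,k,l} - zz ζ k m • eV true {i,j,k,m}
    + zz ζ l m • eV true {i,j,l,m} - zz ζ l m • eV true {i,k,l,m}

/-- The second factor of `Wt`, as a vector. -/
def vB (ζ : ℕ → ℂ) (i j k l m : ℕ) : GV :=
  zz ζ k l • eV false {i,j,k,l} - zz ζ k m • eV false {i,j,k,m}
    + zz ζ l m • eV false {i,j,l,m} + zz ζ l m • eV true {j,k,l,m}

/-- The third factor of `Wt`, as a vector. -/
def vC (ζ : ℕ → ℂ) (i j k l m : ℕ) : GV :=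
  -(zz ζ i l • eV true {i,j,k,l}) - zz ζ j l • eV false {i,j,k,l}
    + zz ζ i m • eV true {i,j,k,m} + zz ζ j m • eV false {i,j,k,m}
    - zz ζ l m • eV false {i,k,l,m} + zz ζ l m • eV false {j,k,l,m}

lemma Wt_eq (ζ : ℕ → ℂ) (i j k l m : ℕ) :
    Wt ζ i j k l m = (zz ζ l m)⁻¹ •
      (ExteriorAlgebra.ι ℂ (vA ζ i j k l m) * ExteriorAlgebra.ι ℂ (vB ζ i j k l m) *
        ExteriorAlgebra.ι ℂ (vC ζ i j k l m)) := by
  unfold Wt vA vB vC ga gb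
  simp only [gen_eq, map_add, map_sub, map_smul, map_neg]

/-- The dual functional of the face operator `d123`. -/
def phi123 (ζ : ℕ → ℂ) : Module.Dual ℂ GV :=
  (zz ζ 2 3 / zz ζ 3 4) • dual true {1,2,3,4} + (zz ζ 3 1 / zz ζ 3 4) • dual false {1,2,3,4}
    + (zz ζ 2 3 / zz ζ 3 5) • dual true {1,2,3,5} + (zz ζ 3 1 / zz ζ 3 5) • dual false {1,2,3,5}
    + (zz ζ 2 3 / zz ζ 3 6) • dual true {1,2,3,6} + (zz ζ 3 1 / zz ζ 3 6) • dual false {1,2,3,6}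

/-- The dual functional of the face operator `d456`. -/
def phi456 : Module.Dual ℂ GV :=
  -(dual false {1,4,5,6}) - dual false {2,4,5,6} - dual false {3,4,5,6}

lemma d123_eq (ζ : ℕ → ℂ) : d123 ζ = contractLeft (phi123 ζ) := by
  unfold d123 phi123 pdA pdB
  simp only [map_add, map_smul]

lemma d456_eq : d456 = contractLeft phi456 := by
  unfold d456 phi456 pdB
  simp only [map_neg, map_sub]

lemma ker_mul {φ : Module.Dual ℂ GV} {x : GA} (hx : contractRight x φ = 0)
    {v : GV} (hv : φ v = 0) :
    contractRight (x * ExteriorAlgebra.ι ℂ v) φ = 0 := by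
  rw [contractRight_mul_ι, hv, hx, zero_smul, zero_mul, sub_zero]

lemma ker_mulW {φ : Module.Dual ℂ GV} {x : GA} (hx : contractRight x φ = 0)
    {ζ : ℕ → ℂ} {i j k l m : ℕ} (hA : φ (vA ζ i j k l m) = 0) (hB : φ (vB ζ i j k l m) = 0)
    (hC : φ (vC ζ i j k l m) = 0) :
    contractRight (x * Wt ζ i j k l m) φ = 0 := by
  rw [Wt_eq, mul_smul_comm, map_smul, LinearMap.smul_apply, ← mul_assoc, ← mul_assoc,
    ker_mul (ker_mul (ker_mul hx hA) hB) hC, smul_zero]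

lemma rsw (ψ ψ' : Module.Dual ℂ GV) (x : GA) :
    contractRight.flip ψ' (contractRight.flip ψ x)
      = -contractRight.flip ψ (contractRight.flip ψ' x) :=
  contractRight_comm ψ ψ' x

lemma rsq (ψ : Module.Dual ℂ GV) (x : GA) :
    contractRight.flip ψ (contractRight.flip ψ x) = 0 :=
  contractRight_contractRight ψ x

lemma kill6a (ψ1 ψ2 ψ3 ψ4 ψ5 ψ6 φ : Module.Dual ℂ GV) (c1 c2 c3 c4 c5 c6 : ℂ)
    (hφ : φ = c1 • ψ1 + c2 • ψ2 + c3 • ψ3 + c4 • ψ4 + c5 • ψ5 + c6 • ψ6)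
    (hc1 : c1 ≠ 0) (X : GA) (hX : contractRight.flip φ X = 0) :
    contractRight.flip ψ6 (contractRight.flip ψ5 (contractRight.flip ψ4 (contractRight.flip ψ3
      (contractRight.flip ψ2 (contractRight.flip ψ1 X))))) = 0 := by
  have h0 : c1 • contractRight.flip ψ1 X + c2 • contractRight.flip ψ2 X
      + c3 • contractRight.flip ψ3 X + c4 • contractRight.flip ψ4 X
      + c5 • contractRight.flip ψ5 X + c6 • contractRight.flip ψ6 X = 0 := by
    rw [← hX, hφ]
    simp only [map_add, map_smul, LinearMap.add_apply, LinearMap.smul_apply]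
  have h2 : c1 • contractRight.flip ψ1 X + (c2 • contractRight.flip ψ2 X
      + c3 • contractRight.flip ψ3 X + c4 • contractRight.flip ψ4 X
      + c5 • contractRight.flip ψ5 X + c6 • contractRight.flip ψ6 X) = 0 := by
    rw [← h0]; abel
  have h1 : contractRight.flip ψ1 X = c1⁻¹ • -(c2 • contractRight.flip ψ2 X
      + c3 • contractRight.flip ψ3 X + c4 • contractRight.flip ψ4 X
      + c5 • contractRight.flip ψ5 X + c6 • contractRight.flip ψ6 X) := by
    rw [← eq_neg_of_add_eq_zero_left h2, inv_smul_smul₀ hc1]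
  rw [h1]
  simp only [map_smul, map_neg, map_add,
    rsw ψ3 ψ2, rsw ψ4 ψ2, rsw ψ4 ψ3, rsw ψ5 ψ2, rsw ψ5 ψ3, rsw ψ5 ψ4,
    rsw ψ6 ψ2, rsw ψ6 ψ3, rsw ψ6 ψ4, rsw ψ6 ψ5,
    rsq, map_zero, neg_zero, smul_zero, add_zero, zero_add, neg_neg]

lemma kill6b (ψ1 ψ2 ψ3 ψ4 ψ5 ψ6 φ : Module.Dual ℂ GV)
    (hφ : φ = -ψ2 - ψ4 - ψ6) (X : GA) (hX : contractRight.flip φ X = 0) :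
    contractRight.flip ψ6 (contractRight.flip ψ5 (contractRight.flip ψ4 (contractRight.flip ψ3
      (contractRight.flip ψ2 (contractRight.flip ψ1 X))))) = 0 := by
  have hYφ : contractRight.flip φ (contractRight.flip ψ1 X) = 0 := by
    rw [rsw ψ1 φ X, hX, map_zero, neg_zero]
  have h1 : contractRight.flip ψ2 (contractRight.flip ψ1 X)
      = -contractRight.flip ψ4 (contractRight.flip ψ1 X)
        - contractRight.flip ψ6 (contractRight.flip ψ1 X) := by
    have hψ2 : ψ2 = -φ - ψ4 - ψ6 := by rw [hφ]; abel
    rw [hψ2]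
    simp only [map_sub, map_neg, LinearMap.sub_apply, LinearMap.neg_apply, hYφ]
    abel
  rw [h1]
  simp only [map_sub, map_neg, rsw ψ4 ψ3, rsw ψ6 ψ3, rsw ψ6 ψ4, rsw ψ6 ψ5, rsq,
    map_zero, neg_zero, neg_neg, sub_zero, zero_sub, add_zero, zero_add]

set_option linter.unusedVariables false in
lemma evA1 (ζ : ℕ → ℂ) (h34 : zz ζ 3 4 ≠ 0) (h35 : zz ζ 3 5 ≠ 0) (h36 : zz ζ 3 6 ≠ 0) :
    phi123 ζ (vA ζ 1 2 3 4 5) = 0 := by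
  unfold phi123 vA
  simp only [LinearMap.add_apply, LinearMap.sub_apply, LinearMap.neg_apply,
    LinearMap.smul_apply, map_add, map_sub, map_smul, map_neg, dual_eV, smul_eq_mul]
  simp (config := { decide := true }) only [mul_zero, mul_one, add_zero, zero_add, if_false, if_true]
  all_goals try field_simp
  all_goals (simp only [zz]; ring)

set_option linter.unusedVariables false in
lemma evB1 (ζ : ℕ → ℂ) (h34 : zz ζ 3 4 ≠ 0) (h35 : zz ζ 3 5 ≠ 0) (h36 : zz ζ 3 6 ≠ 0) :
    phi123 ζ (vB ζ 1 2 3 4 5) = 0 := by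
  unfold phi123 vB
  simp only [LinearMap.add_apply, LinearMap.sub_apply, LinearMap.neg_apply,
    LinearMap.smul_apply, map_add, map_sub, map_smul, map_neg, dual_eV, smul_eq_mul]
  simp (config := { decide := true }) only [mul_zero, mul_one, add_zero, zero_add, if_false, if_true]
  all_goals try field_simp
  all_goals (simp only [zz]; ring)

set_option linter.unusedVariables false in
lemma evC1 (ζ : ℕ → ℂ) (h34 : zz ζ 3 4 ≠ 0) (h35 : zz ζ 3 5 ≠ 0) (h36 : zz ζ 3 6 ≠ 0) :
    phi123 ζ (vC ζ 1 2 3 4 5) = 0 := by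
  unfold phi123 vC
  simp only [LinearMap.add_apply, LinearMap.sub_apply, LinearMap.neg_apply,
    LinearMap.smul_apply, map_add, map_sub, map_smul, map_neg, dual_eV, smul_eq_mul]
  simp (config := { decide := true }) only [mul_zero, mul_one, add_zero, zero_add, if_false, if_true]
  all_goals try field_simp
  all_goals (simp only [zz]; ring)

set_option linter.unusedVariables false in
lemma evA2 (ζ : ℕ → ℂ) (h34 : zz ζ 3 4 ≠ 0) (h35 : zz ζ 3 5 ≠ 0) (h36 : zz ζ 3 6 ≠ 0) :
    phi123 ζ (vA ζ 1 2 3 4 6) = 0 := by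
  unfold phi123 vA
  simp only [LinearMap.add_apply, LinearMap.sub_apply, LinearMap.neg_apply,
    LinearMap.smul_apply, map_add, map_sub, map_smul, map_neg, dual_eV, smul_eq_mul]
  simp (config := { decide := true }) only [mul_zero, mul_one, add_zero, zero_add, if_false, if_true]
  all_goals try field_simp
  all_goals (simp only [zz]; ring)

set_option linter.unusedVariables false in
lemma evB2 (ζ : ℕ → ℂ) (h34 : zz ζ 3 4 ≠ 0) (h35 : zz ζ 3 5 ≠ 0) (h36 : zz ζ 3 6 ≠ 0) :
    phi123 ζ (vB ζ 1 2 3 4 6) = 0 := by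
  unfold phi123 vB
  simp only [LinearMap.add_apply, LinearMap.sub_apply, LinearMap.neg_apply,
    LinearMap.smul_apply, map_add, map_sub, map_smul, map_neg, dual_eV, smul_eq_mul]
  simp (config := { decide := true }) only [mul_zero, mul_one, add_zero, zero_add, if_false, if_true]
  all_goals try field_simp
  all_goals (simp only [zz]; ring)

set_option linter.unusedVariables false in
lemma evC2 (ζ : ℕ → ℂ) (h34 : zz ζ 3 4 ≠ 0) (h35 : zz ζ 3 5 ≠ 0) (h36 : zz ζ 3 6 ≠ 0) :
    phi123 ζ (vC ζ 1 2 3 4 6) = 0 := by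
  unfold phi123 vC
  simp only [LinearMap.add_apply, LinearMap.sub_apply, LinearMap.neg_apply,
    LinearMap.smul_apply, map_add, map_sub, map_smul, map_neg, dual_eV, smul_eq_mul]
  simp (config := { decide := true }) only [mul_zero, mul_one, add_zero, zero_add, if_false, if_true]
  all_goals try field_simp
  all_goals (simp only [zz]; ring)

set_option linter.unusedVariables false in
lemma evA3 (ζ : ℕ → ℂ) (h34 : zz ζ 3 4 ≠ 0) (h35 : zz ζ 3 5 ≠ 0) (h36 : zz ζ 3 6 ≠ 0) :
    phi123 ζ (vA ζ 1 2 3 5 6) = 0 := by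
  unfold phi123 vA
  simp only [LinearMap.add_apply, LinearMap.sub_apply, LinearMap.neg_apply,
    LinearMap.smul_apply, map_add, map_sub, map_smul, map_neg, dual_eV, smul_eq_mul]
  simp (config := { decide := true }) only [mul_zero, mul_one, add_zero, zero_add, if_false, if_true]
  all_goals try field_simp
  all_goals (simp only [zz]; ring)

set_option linter.unusedVariables false in
lemma evB3 (ζ : ℕ → ℂ) (h34 : zz ζ 3 4 ≠ 0) (h35 : zz ζ 3 5 ≠ 0) (h36 : zz ζ 3 6 ≠ 0) :
    phi123 ζ (vB ζ 1 2 3 5 6) = 0 := by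
  unfold phi123 vB
  simp only [LinearMap.add_apply, LinearMap.sub_apply, LinearMap.neg_apply,
    LinearMap.smul_apply, map_add, map_sub, map_smul, map_neg, dual_eV, smul_eq_mul]
  simp (config := { decide := true }) only [mul_zero, mul_one, add_zero, zero_add, if_false, if_true]
  all_goals try field_simp
  all_goals (simp only [zz]; ring)

set_option linter.unusedVariables false in
lemma evC3 (ζ : ℕ → ℂ) (h34 : zz ζ 3 4 ≠ 0) (h35 : zz ζ 3 5 ≠ 0) (h36 : zz ζ 3 6 ≠ 0) :
    phi123 ζ (vC ζ 1 2 3 5 6) = 0 := by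
  unfold phi123 vC
  simp only [LinearMap.add_apply, LinearMap.sub_apply, LinearMap.neg_apply,
    LinearMap.smul_apply, map_add, map_sub, map_smul, map_neg, dual_eV, smul_eq_mul]
  simp (config := { decide := true }) only [mul_zero, mul_one, add_zero, zero_add, if_false, if_true]
  all_goals try field_simp
  all_goals (simp only [zz]; ring)

set_option linter.unusedVariables false in
lemma fvA1 (ζ : ℕ → ℂ) : phi456 (vA ζ 1 2 4 5 6) = 0 := by
  unfold phi456 vA
  simp only [LinearMap.add_apply, LinearMap.sub_apply, LinearMap.neg_apply,
    LinearMap.smul_apply, map_add, map_sub, map_smul, map_neg, dual_eV, smul_eq_mul]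
  simp (config := { decide := true }) only [mul_zero, mul_one, add_zero, zero_add, if_false, if_true]
  all_goals try field_simp
  all_goals (simp only [zz]; ring)

set_option linter.unusedVariables false in
lemma fvB1 (ζ : ℕ → ℂ) : phi456 (vB ζ 1 2 4 5 6) = 0 := by
  unfold phi456 vB
  simp only [LinearMap.add_apply, LinearMap.sub_apply, LinearMap.neg_apply,
    LinearMap.smul_apply, map_add, map_sub, map_smul, map_neg, dual_eV, smul_eq_mul]
  simp (config := { decide := true }) only [mul_zero, mul_one, add_zero, zero_add, if_false, if_true]
  all_goals try field_simp
  all_goals (simp only [zz]; ring)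

set_option linter.unusedVariables false in
lemma fvC1 (ζ : ℕ → ℂ) : phi456 (vC ζ 1 2 4 5 6) = 0 := by
  unfold phi456 vC
  simp only [LinearMap.add_apply, LinearMap.sub_apply, LinearMap.neg_apply,
    LinearMap.smul_apply, map_add, map_sub, map_smul, map_neg, dual_eV, smul_eq_mul]
  simp (config := { decide := true }) only [mul_zero, mul_one, add_zero, zero_add, if_false, if_true]
  all_goals try field_simp
  all_goals (simp only [zz]; ring)

set_option linter.unusedVariables false in
lemma fvA2 (ζ : ℕ → ℂ) : phi456 (vA ζ 1 3 4 5 6) = 0 := by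
  unfold phi456 vA
  simp only [LinearMap.add_apply, LinearMap.sub_apply, LinearMap.neg_apply,
    LinearMap.smul_apply, map_add, map_sub, map_smul, map_neg, dual_eV, smul_eq_mul]
  simp (config := { decide := true }) only [mul_zero, mul_one, add_zero, zero_add, if_false, if_true]
  all_goals try field_simp
  all_goals (simp only [zz]; ring)

set_option linter.unusedVariables false in
lemma fvB2 (ζ : ℕ → ℂ) : phi456 (vB ζ 1 3 4 5 6) = 0 := by
  unfold phi456 vB
  simp only [LinearMap.add_apply, LinearMap.sub_apply, LinearMap.neg_apply,
    LinearMap.smul_apply, map_add, map_sub, map_smul, map_neg, dual_eV, smul_eq_mul]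
  simp (config := { decide := true }) only [mul_zero, mul_one, add_zero, zero_add, if_false, if_true]
  all_goals try field_simp
  all_goals (simp only [zz]; ring)

set_option linter.unusedVariables false in
lemma fvC2 (ζ : ℕ → ℂ) : phi456 (vC ζ 1 3 4 5 6) = 0 := by
  unfold phi456 vC
  simp only [LinearMap.add_apply, LinearMap.sub_apply, LinearMap.neg_apply,
    LinearMap.smul_apply, map_add, map_sub, map_smul, map_neg, dual_eV, smul_eq_mul]
  simp (config := { decide := true }) only [mul_zero, mul_one, add_zero, zero_add, if_false, if_true]
  all_goals try field_simp
  all_goals (simp only [zz]; ring)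

set_option linter.unusedVariables false in
lemma fvA3 (ζ : ℕ → ℂ) : phi456 (vA ζ 2 3 4 5 6) = 0 := by
  unfold phi456 vA
  simp only [LinearMap.add_apply, LinearMap.sub_apply, LinearMap.neg_apply,
    LinearMap.smul_apply, map_add, map_sub, map_smul, map_neg, dual_eV, smul_eq_mul]
  simp (config := { decide := true }) only [mul_zero, mul_one, add_zero, zero_add, if_false, if_true]
  all_goals try field_simp
  all_goals (simp only [zz]; ring)

set_option linter.unusedVariables false in
lemma fvB3 (ζ : ℕ → ℂ) : phi456 (vB ζ 2 3 4 5 6) = 0 := by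
  unfold phi456 vB
  simp only [LinearMap.add_apply, LinearMap.sub_apply, LinearMap.neg_apply,
    LinearMap.smul_apply, map_add, map_sub, map_smul, map_neg, dual_eV, smul_eq_mul]
  simp (config := { decide := true }) only [mul_zero, mul_one, add_zero, zero_add, if_false, if_true]
  all_goals try field_simp
  all_goals (simp only [zz]; ring)

set_option linter.unusedVariables false in
lemma fvC3 (ζ : ℕ → ℂ) : phi456 (vC ζ 2 3 4 5 6) = 0 := by
  unfold phi456 vC
  simp only [LinearMap.add_apply, LinearMap.sub_apply, LinearMap.neg_apply,
    LinearMap.smul_apply, map_add, map_sub, map_smul, map_neg, dual_eV, smul_eq_mul]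
  simp (config := { decide := true }) only [mul_zero, mul_one, add_zero, zero_add, if_false, if_true]
  all_goals try field_simp
  all_goals (simp only [zz]; ring)

end FaceIndependenceAux

set_option maxRecDepth 8000 in
/-- The two sides of the 3→3 relation do not depend on the admissible choice of the
2-face weight. -/
theorem face_weight_independence_three_three (ζ : ℕ → ℂ)
    (hζ : Set.InjOn ζ (Set.Icc 1 6)) :
    (∀ w w' : GA, homog 1 w → homog 1 w' → d123 ζ w = 1 → d123 ζ w' = 1 →
      int33L ζ w = int33L ζ w') ∧
    (∀ v v' : GA, homog 1 v → homog 1 v' → d456 v = 1 → d456 v' = 1 →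
      int33R ζ v = int33R ζ v') := by
  have hzz : ∀ i j : ℕ, i ∈ Set.Icc 1 6 → j ∈ Set.Icc 1 6 → i ≠ j → zz ζ i j ≠ 0 := by
    intro i j hi hj hij h
    exact hij (hζ hi hj (by rwa [zz, sub_eq_zero] at h))
  have h23 : zz ζ 2 3 ≠ 0 := hzz 2 3 (by norm_num) (by norm_num) (by norm_num)
  have h34 : zz ζ 3 4 ≠ 0 := hzz 3 4 (by norm_num) (by norm_num) (by norm_num)
  have h35 : zz ζ 3 5 ≠ 0 := hzz 3 5 (by norm_num) (by norm_num) (by norm_num)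
  have h36 : zz ζ 3 6 ≠ 0 := hzz 3 6 (by norm_num) (by norm_num) (by norm_num)
  constructor
  · intro w w' hw hw' hd hd'
    simp only [homog, pow_one] at hw hw'
    obtain ⟨vw, rfl⟩ := LinearMap.mem_range.mp hw
    obtain ⟨vw', rfl⟩ := LinearMap.mem_range.mp hw'
    rw [d123_eq] at hd hd'
    rw [CliffordAlgebra.contractLeft_ι] at hd hd'
    have hphi : phi123 ζ (vw - vw') = 0 := by
      have e1 : algebraMap ℂ GA (phi123 ζ vw) = algebraMap ℂ GA (phi123 ζ vw') := by
        rw [hd, hd']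
      rw [ExteriorAlgebra.algebraMap_inj] at e1
      rw [map_sub, e1, sub_self]
    have hF : CliffordAlgebra.contractRight
        ((Wt ζ 1 2 3 4 5 * Wt ζ 1 2 3 4 6 * Wt ζ 1 2 3 5 6) *
          ExteriorAlgebra.ι ℂ (vw - vw')) (phi123 ζ) = 0 := by
      have k0 : CliffordAlgebra.contractRight (1 : GA) (phi123 ζ) = 0 :=
        CliffordAlgebra.contractRight_one _ _
      have k1 := ker_mulW k0 (evA1 ζ h34 h35 h36) (evB1 ζ h34 h35 h36) (evC1 ζ h34 h35 h36)
      rw [one_mul] at k1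
      have k2 := ker_mulW k1 (evA2 ζ h34 h35 h36) (evB2 ζ h34 h35 h36) (evC2 ζ h34 h35 h36)
      have k3 := ker_mulW k2 (evA3 ζ h34 h35 h36) (evB3 ζ h34 h35 h36) (evC3 ζ h34 h35 h36)
      exact ker_mul k3 hphi
    have key : int33L ζ (ExteriorAlgebra.ι ℂ vw) - int33L ζ (ExteriorAlgebra.ι ℂ vw') = 0 := by
      unfold int33L binAB binB binA
      simp only [LinearMap.coe_comp, Function.comp_apply]
      rw [← map_sub, ← map_sub, ← map_sub, ← map_sub, ← map_sub, ← map_sub, ← mul_sub,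
        ← map_sub]
      have hF' : CliffordAlgebra.contractRight.flip (phi123 ζ)
          ((Wt ζ 1 2 3 4 5 * Wt ζ 1 2 3 4 6 * Wt ζ 1 2 3 5 6) *
            ExteriorAlgebra.ι ℂ (vw - vw')) = 0 := by
        rw [LinearMap.flip_apply]; exact hF
      exact kill6a _ _ _ _ _ _ _ _ _ _ _ _ _ rfl (div_ne_zero h23 h34) _ hF'
    exact sub_eq_zero.mp key
  · intro w w' hw hw' hd hd'
    simp only [homog, pow_one] at hw hw'
    obtain ⟨vw, rfl⟩ := LinearMap.mem_range.mp hw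
    obtain ⟨vw', rfl⟩ := LinearMap.mem_range.mp hw'
    rw [d456_eq] at hd hd'
    rw [CliffordAlgebra.contractLeft_ι] at hd hd'
    have hphi : phi456 (vw - vw') = 0 := by
      have e1 : algebraMap ℂ GA (phi456 vw) = algebraMap ℂ GA (phi456 vw') := by
        rw [hd, hd']
      rw [ExteriorAlgebra.algebraMap_inj] at e1
      rw [map_sub, e1, sub_self]
    have hF : CliffordAlgebra.contractRight
        ((Wt ζ 1 2 4 5 6 * Wt ζ 1 3 4 5 6 * Wt ζ 2 3 4 5 6) *
          ExteriorAlgebra.ι ℂ (vw - vw')) phi456 = 0 := by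
      have k0 : CliffordAlgebra.contractRight (1 : GA) phi456 = 0 :=
        CliffordAlgebra.contractRight_one _ _
      have k1 := ker_mulW k0 (fvA1 ζ) (fvB1 ζ) (fvC1 ζ)
      rw [one_mul] at k1
      have k2 := ker_mulW k1 (fvA2 ζ) (fvB2 ζ) (fvC2 ζ)
      have k3 := ker_mulW k2 (fvA3 ζ) (fvB3 ζ) (fvC3 ζ)
      exact ker_mul k3 hphi
    have key : int33R ζ (ExteriorAlgebra.ι ℂ vw) - int33R ζ (ExteriorAlgebra.ι ℂ vw') = 0 := by
      unfold int33R binAB binB binA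
      simp only [LinearMap.coe_comp, Function.comp_apply]
      rw [← map_sub, ← map_sub, ← map_sub, ← map_sub, ← map_sub, ← map_sub, ← mul_sub,
        ← map_sub]
      have hF' : CliffordAlgebra.contractRight.flip phi456
          ((Wt ζ 1 2 4 5 6 * Wt ζ 1 3 4 5 6 * Wt ζ 2 3 4 5 6) *
            ExteriorAlgebra.ι ℂ (vw - vw')) = 0 := by
        rw [LinearMap.flip_apply]; exact hF
      exact kill6b _ _ _ _ _ _ _ rfl _ hF'
    exact sub_eq_zero.mp key
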